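/- Let v : ℝ × ℝ³ → ℝ³ and J : ℝ × ℝ³ → ℝ³ be smooth (C²) vector fields satisfying ∂t J_k + ∂_k(v_m J_m) + v_m(∂_m J_k − ∂_k J_m) = 0 for all k. Define the involution tensor I_{mk} = ∂_m J_k − ∂_k J_m (i.e., the curl of J). If at some time t the field J(t, ·) is curl-free, i.e., I_{mk}(t, x) = 0 for all m, k, x, then ∂t I_{mk}(t, x) = 0 for all m, k, x at that time. -/

import Mathlib

/-- Time partial derivative of a spacetime scalar field. -/
noncomputable def pt (f : ℝ × (Fin 3 → ℝ) → ℝ) (x : ℝ × (Fin 3 → ℝ)) : ℝ :=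
  fderiv ℝ f x (1, 0)

/-- Spatial partial derivative in the i-th direction of a spacetime scalar field. -/
noncomputable def ps (i : Fin 3) (f : ℝ × (Fin 3 → ℝ) → ℝ) (x : ℝ × (Fin 3 → ℝ)) : ℝ :=
  fderiv ℝ f x (0, Pi.single i 1)

/-- Involution tensor I_{mk} = ∂_m J_k - ∂_k J_m. -/
noncomputable def Invol (J : ℝ × (Fin 3 → ℝ) → Fin 3 → ℝ) (m k : Fin 3)
    (x : ℝ × (Fin 3 → ℝ)) : ℝ :=
  ps m (fun y => J y k) x - ps k (fun y => J y m) x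

section helpers2

section helpers
variable {f g : ℝ × (Fin 3 → ℝ) → ℝ}

lemma D_cd (hf : ContDiff ℝ 2 f) (u : ℝ × (Fin 3 → ℝ)) :
    ContDiff ℝ 1 (fun y => fderiv ℝ f y u) :=
  (hf.fderiv_right (by norm_num)).clm_apply contDiff_const

lemma D_diff (hf : ContDiff ℝ 2 f) (u : ℝ × (Fin 3 → ℝ)) :
    Differentiable ℝ (fun y => fderiv ℝ f y u) :=
  (D_cd hf u).differentiable one_ne_zero

lemma D_app (hf : ContDiff ℝ 2 f) (u w x : ℝ × (Fin 3 → ℝ)) :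
    fderiv ℝ (fun y => fderiv ℝ f y u) x w = fderiv ℝ (fderiv ℝ f) x w u := by
  rw [fderiv_clm_apply ((hf.fderiv_right (m := 1) (by norm_num)).differentiable one_ne_zero x)
    (differentiableAt_const u)]
  simp

lemma D_swap (hf : ContDiff ℝ 2 f) (u w x : ℝ × (Fin 3 → ℝ)) :
    fderiv ℝ (fun y => fderiv ℝ f y u) x w = fderiv ℝ (fun y => fderiv ℝ f y w) x u := by
  rw [D_app hf u w x, D_app hf w u x]
  exact hf.contDiffAt.isSymmSndFDerivAt (by simp) w u

lemma slice_zero {t : ℝ} {x : Fin 3 → ℝ} (hg : DifferentiableAt ℝ g (t, x))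
    (h0 : ∀ y, g (t, y) = 0) (e : Fin 3 → ℝ) : fderiv ℝ g (t, x) (0, e) = 0 := by
  have hincl : HasFDerivAt (fun y : Fin 3 → ℝ => ((t, y) : ℝ × (Fin 3 → ℝ)))
      ((0 : (Fin 3 → ℝ) →L[ℝ] ℝ).prod (ContinuousLinearMap.id ℝ _)) x :=
    HasFDerivAt.prodMk (hasFDerivAt_const t x) (hasFDerivAt_id x)
  have hz : HasFDerivAt (fun y => g (t, y)) (0 : (Fin 3 → ℝ) →L[ℝ] ℝ) x := by
    simp only [h0]; exact hasFDerivAt_const 0 x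
  have huniq := hz.unique (hg.hasFDerivAt.comp x hincl)
  have := congrArg (fun (L : (Fin 3 → ℝ) →L[ℝ] ℝ) => L e) huniq
  simpa using this.symm

end helpers



theorem curl_involution_stationary
    (v J : ℝ × (Fin 3 → ℝ) → Fin 3 → ℝ)
    (hv : ∀ k, ContDiff ℝ 2 (fun x => v x k))
    (hJ : ∀ k, ContDiff ℝ 2 (fun x => J x k))
    (pde : ∀ (x : ℝ × (Fin 3 → ℝ)) (k : Fin 3),
      pt (fun y => J y k) x
        + ps k (fun y => ∑ m, v y m * J y m) x
        + ∑ m, v x m * (ps m (fun y => J y k) x - ps k (fun y => J y m) x) = 0)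
    (t : ℝ)
    (hcurl : ∀ (m k : Fin 3) (x : Fin 3 → ℝ), Invol J m k (t, x) = 0) :
    ∀ (m k : Fin 3) (x : Fin 3 → ℝ), pt (Invol J m k) (t, x) = 0 := by
  intro m k x
  -- notation
  set e0 : ℝ × (Fin 3 → ℝ) := (1, 0) with he0
  have es : ∀ i : Fin 3, True := fun _ => trivial
  -- S is the scalar v · J
  set S : ℝ × (Fin 3 → ℝ) → ℝ := fun y => ∑ n, v y n * J y n with hSdef
  have hS : ContDiff ℝ 2 S := ContDiff.sum fun n _ => (hv n).mul (hJ n)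
  -- spatial basis directions
  let e : Fin 3 → ℝ × (Fin 3 → ℝ) := fun i => (0, Pi.single i 1)
  -- the curl components as functions
  let I : Fin 3 → Fin 3 → (ℝ × (Fin 3 → ℝ)) → ℝ := fun n k y =>
    fderiv ℝ (fun z => J z k) y (e n) - fderiv ℝ (fun z => J z n) y (e k)
  have hIdiff : ∀ n k' y, DifferentiableAt ℝ (I n k') y := fun n k' y =>
    ((D_diff (hJ k') (e n)) y).sub ((D_diff (hJ n) (e k')) y)
  have hI0 : ∀ n k' y, I n k' (t, y) = 0 := fun n k' y => hcurl n k' y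
  -- PDE rewritten: ∂t J_k = -(∂_k S + Σ_n v_n I_{nk})
  have hpde : ∀ k' : Fin 3, (fun y => fderiv ℝ (fun z => J z k') y e0)
      = fun y => -(fderiv ℝ S y (e k') + ∑ n, v y n * I n k' y) := by
    intro k'
    funext y
    have := pde y k'
    simp only [pt, ps, Invol, hSdef] at this ⊢
    linarith
  -- key computation: ∂_i (∂t J_k') at (t,x) = -∂_i ∂_k' S at (t,x)
  have key : ∀ (i k' : Fin 3),
      fderiv ℝ (fun y => fderiv ℝ (fun z => J z k') y e0) (t, x) (e i)
        = -(fderiv ℝ (fun y => fderiv ℝ S y (e k')) (t, x) (e i)) := by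
    intro i k'
    rw [hpde k']
    have hd1 : DifferentiableAt ℝ (fun y => fderiv ℝ S y (e k')) (t, x) :=
      D_diff hS (e k') _
    have hd2 : ∀ n : Fin 3, DifferentiableAt ℝ (fun y => v y n * I n k' y) (t, x) :=
      fun n => (((hv n).differentiable (by norm_num)) (t, x)).mul (hIdiff n k' (t, x))
    have hd3 : DifferentiableAt ℝ (fun y => ∑ n, v y n * I n k' y) (t, x) :=
      DifferentiableAt.fun_sum fun n _ => hd2 n
    rw [fderiv_fun_neg]
    rw [fderiv_fun_add hd1 hd3]
    have hsum : fderiv ℝ (fun y => ∑ n, v y n * I n k' y) (t, x) (e i) = 0 := by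
      rw [fderiv_fun_sum fun n _ => hd2 n]
      rw [ContinuousLinearMap.sum_apply]
      apply Finset.sum_eq_zero
      intro n _
      rw [fderiv_fun_mul (((hv n).differentiable (by norm_num)) (t, x)) (hIdiff n k' (t, x))]
      have h1 : I n k' (t, x) = 0 := hI0 n k' x
      have h2 : fderiv ℝ (I n k') (t, x) (e i) = 0 :=
        slice_zero (hIdiff n k' (t, x)) (hI0 n k') _
      simp [h1, h2]
    simp only [ContinuousLinearMap.neg_apply, ContinuousLinearMap.add_apply, hsum]
    ring
  -- now put everything together
  have hJkdiff : ∀ k' u, Differentiable ℝ (fun y => fderiv ℝ (fun z => J z k') y u) :=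
    fun k' u => D_diff (hJ k') u
  have expand : pt (Invol J m k) (t, x)
      = fderiv ℝ (fun y => fderiv ℝ (fun z => J z k) y (e m)) (t, x) e0
        - fderiv ℝ (fun y => fderiv ℝ (fun z => J z m) y (e k)) (t, x) e0 := by
    have hIv : Invol J m k = fun y => fderiv ℝ (fun z => J z k) y (e m)
        - fderiv ℝ (fun z => J z m) y (e k) := rfl
    simp only [pt, hIv]
    rw [fderiv_fun_sub (hJkdiff k (e m) (t, x)) (hJkdiff m (e k) (t, x))]
    simp [he0]
  rw [expand, D_swap (hJ k) (e m) e0 (t, x), D_swap (hJ m) (e k) e0 (t, x),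
    key m k, key k m, D_swap hS (e k) (e m) (t, x)]
  ring
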